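/- Let W ∈ ℝ^{n×n} be a mixing matrix with mixing rate α ∈ [0,1), let η ∈ ℝ, let S ≥ 1 be an integer, and let u^0, …, u^S and v^0, …, v^{S−1} be vectors in ℝ^{nd} satisfying u^s = (W ⊗ I_d)(u^{s−1} − η·v^{s−1}) for all 1 ≤ s ≤ S. Then ‖u^S − 1_n ⊗ ū^S‖₂² ≤ (2α²/(1+α²))^S·‖u^0 − 1_n ⊗ ū^0‖₂² + (2α²η²/(1−α²))·Σ_{s=0}^{S−1} ‖v^s − 1_n ⊗ v̄^s‖₂², where ū^s, v̄^s denote block averages. -/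

import Mathlib

open Finset

noncomputable section

/-- `ℝ^d` as a Euclidean space. -/
abbrev Vec (d : ℕ) := EuclideanSpace ℝ (Fin d)

/-- `ℝ^{nd}` as a stack of `n` blocks in `ℝ^d`, with the Euclidean (ℓ₂) norm. -/
abbrev Stacked (n d : ℕ) := PiLp 2 (fun _ : Fin n => Vec d)

/-- Block average `x̄ = (1/n) Σᵢ xᵢ` of a stacked vector. -/
def blockAvg {n d : ℕ} (x : Stacked n d) : Vec d := (n : ℝ)⁻¹ • ∑ i, x i

/-- The stacked vector `1ₙ ⊗ y` whose every block equals `y`. -/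
def stack (n : ℕ) {d : ℕ} (y : Vec d) : Stacked n d := WithLp.toLp 2 (fun _ => y)

/-- Action of `W ⊗ I_d` on a stacked vector. -/
def kronApply {n d : ℕ} (W : Matrix (Fin n) (Fin n) ℝ) (x : Stacked n d) : Stacked n d :=
  WithLp.toLp 2 (fun i => ∑ j, W i j • x j)

/-- A mixing matrix: `W·1ₙ = 1ₙ` and `Wᵀ·1ₙ = 1ₙ`. -/
def IsMixing {n : ℕ} (W : Matrix (Fin n) (Fin n) ℝ) : Prop :=
  W.mulVec (fun _ => 1) = (fun _ => 1) ∧ Matrix.vecMul (fun _ => 1) W = (fun _ => 1)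

/-- The mixing rate `α = ‖W − (1/n)1ₙ1ₙᵀ‖_op` (ℓ₂ operator norm). -/
def mixingRate {n : ℕ} (W : Matrix (Fin n) (Fin n) ℝ) : ℝ :=
  ‖LinearMap.toContinuousLinearMap
    (Matrix.toEuclideanLin (W - (n : ℝ)⁻¹ • Matrix.of fun _ _ => (1 : ℝ)))‖

-- Young inequality
lemma young_aux {E : Type*} [NormedAddCommGroup E] (a b : E) {β : ℝ} (hβ : 0 < β) :
    ‖a - b‖^2 ≤ (1+β)*‖a‖^2 + (1+β⁻¹)*‖b‖^2 := by
  have h := norm_sub_le a b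
  have key : 2*(‖a‖*‖b‖) ≤ β*‖a‖^2 + β⁻¹*‖b‖^2 := by
    rw [← sub_nonneg]
    have hrw : β*‖a‖^2 + β⁻¹*‖b‖^2 - 2*(‖a‖*‖b‖) = β⁻¹ * (β*‖a‖ - ‖b‖)^2 := by
      field_simp; ring
    rw [hrw]; positivity
  nlinarith [key, mul_self_le_mul_self (norm_nonneg (a-b)) h, sq_nonneg (‖a‖+‖b‖)]

-- norm squared expansion for Stacked
lemma stacked_norm_sq {n d : ℕ} (x : Stacked n d) :
    ‖x‖^2 = ∑ i, ∑ k, (x i k)^2 := by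
  rw [PiLp.norm_sq_eq_of_L2]
  refine Finset.sum_congr rfl fun i _ => ?_
  rw [PiLp.norm_sq_eq_of_L2]
  exact Finset.sum_congr rfl fun k _ => by rw [Real.norm_eq_abs, sq_abs]

lemma eucl_norm_sq {n : ℕ} (y : EuclideanSpace ℝ (Fin n)) :
    ‖y‖^2 = ∑ j, (y j)^2 := by
  rw [PiLp.norm_sq_eq_of_L2]
  exact Finset.sum_congr rfl fun k _ => by rw [Real.norm_eq_abs, sq_abs]

lemma piLp_sum_apply {d : ℕ} {ι : Type*} (s : Finset ι) (f : ι → Vec d) (k : Fin d) :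
    (∑ j ∈ s, f j) k = ∑ j ∈ s, f j k := by
  induction s using Finset.cons_induction with
  | empty => rfl
  | cons a s ha ih => rw [Finset.sum_cons, Finset.sum_cons, PiLp.add_apply, ih]

lemma kron_norm_sq_le {n d : ℕ} (M : Matrix (Fin n) (Fin n) ℝ) (x : Stacked n d) :
    ‖kronApply M x‖^2 ≤
      ‖LinearMap.toContinuousLinearMap (Matrix.toEuclideanLin M)‖^2 * ‖x‖^2 := by
  set C := ‖LinearMap.toContinuousLinearMap (Matrix.toEuclideanLin M)‖ with hC
  have hC0 : 0 ≤ C := norm_nonneg _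
  have hL : ‖kronApply M x‖^2 = ∑ k, ∑ i, (∑ j, M i j * x j k)^2 := by
    rw [stacked_norm_sq, Finset.sum_comm]
    refine Finset.sum_congr rfl fun k _ => Finset.sum_congr rfl fun i _ => ?_
    congr 1
    show (∑ j, M i j • x j) k = _
    rw [piLp_sum_apply]
    exact Finset.sum_congr rfl fun j _ => by rw [PiLp.smul_apply, smul_eq_mul]
  have hR : ‖x‖^2 = ∑ k, ∑ j, (x j k)^2 := by rw [stacked_norm_sq, Finset.sum_comm]
  rw [hL, hR, Finset.mul_sum]
  refine Finset.sum_le_sum fun k _ => ?_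
  set y : EuclideanSpace ℝ (Fin n) := WithLp.toLp 2 (fun j => x j k) with hy
  have h1 : ‖Matrix.toEuclideanLin M y‖ ≤ C * ‖y‖ :=
    (LinearMap.toContinuousLinearMap (Matrix.toEuclideanLin M)).le_opNorm y
  have h2 : ‖Matrix.toEuclideanLin M y‖^2 = ∑ i, (∑ j, M i j * x j k)^2 := by
    rw [eucl_norm_sq]
    exact Finset.sum_congr rfl fun i _ => by congr 1
  have h3 : ‖y‖^2 = ∑ j, (x j k)^2 := by
    rw [eucl_norm_sq]
  calc ∑ i, (∑ j, M i j * x j k)^2 = ‖Matrix.toEuclideanLin M y‖^2 := h2.symm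
    _ ≤ (C * ‖y‖)^2 := by
        have := norm_nonneg (Matrix.toEuclideanLin M y)
        nlinarith
    _ = C^2 * ∑ j, (x j k)^2 := by rw [mul_pow, h3]

lemma kron_entry {n d : ℕ} (M : Matrix (Fin n) (Fin n) ℝ) (z : Stacked n d) (i : Fin n)
    (k : Fin d) : kronApply M z i k = ∑ j, M i j * z j k := by
  show (∑ j, M i j • z j) k = _
  rw [piLp_sum_apply]
  exact Finset.sum_congr rfl fun j _ => by rw [PiLp.smul_apply, smul_eq_mul]

lemma dev_entry {n d : ℕ} (z : Stacked n d) (i : Fin n) (k : Fin d) :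
    (z - stack n (blockAvg z)) i k = z i k - (n:ℝ)⁻¹ * ∑ p, z p k := by
  rw [PiLp.sub_apply, PiLp.sub_apply]
  congr 1
  show ((n:ℝ)⁻¹ • ∑ p, z p) k = _
  rw [PiLp.smul_apply, piLp_sum_apply, smul_eq_mul]

lemma dev_kron {n d : ℕ} (W : Matrix (Fin n) (Fin n) ℝ) (hW : IsMixing W) (x : Stacked n d) :
    kronApply W x - stack n (blockAvg (kronApply W x)) =
      kronApply (W - (n:ℝ)⁻¹ • Matrix.of fun _ _ => (1:ℝ)) (x - stack n (blockAvg x)) := by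
  have hrow : ∀ i, ∑ j, W i j = 1 := fun i => by
    have := congrFun hW.1 i; simpa [Matrix.mulVec, dotProduct] using this
  have hcol : ∀ j, ∑ p, W p j = 1 := fun j => by
    have := congrFun hW.2 j; simpa [Matrix.vecMul, dotProduct] using this
  ext i k
  have hn : (0:ℝ) < n := by exact_mod_cast i.pos
  rw [dev_entry, kron_entry, kron_entry]
  have h1 : ∑ p, kronApply W x p k = ∑ j, x j k := by
    have : ∀ p, kronApply W x p k = ∑ j, W p j * x j k := fun p => kron_entry W x p k
    simp_rw [this]
    rw [Finset.sum_comm]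
    refine Finset.sum_congr rfl fun j _ => ?_
    rw [← Finset.sum_mul, hcol j, one_mul]
  rw [h1]
  have h2 : ∀ j, (W - (n:ℝ)⁻¹ • (Matrix.of fun _ _ => (1:ℝ) : Matrix (Fin n) (Fin n) ℝ)) i j
      = W i j - (n:ℝ)⁻¹ := by
    intro j; simp [Matrix.sub_apply, Matrix.smul_apply]
  simp_rw [h2, dev_entry, sub_mul, mul_sub, Finset.sum_sub_distrib]
  rw [← Finset.sum_mul, hrow i, ← Finset.mul_sum, Finset.sum_const, Finset.card_univ,
    Fintype.card_fin, nsmul_eq_mul]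
  field_simp
  ring

lemma dev_sub_smul {n d : ℕ} (p q : Stacked n d) (η : ℝ) :
    (p - η • q) - stack n (blockAvg (p - η • q)) =
      (p - stack n (blockAvg p)) - η • (q - stack n (blockAvg q)) := by
  ext i k
  have hr : ((p - stack n (blockAvg p)) - η • (q - stack n (blockAvg q))) i k
      = (p - stack n (blockAvg p)) i k - η * (q - stack n (blockAvg q)) i k := by
    simp [PiLp.sub_apply, PiLp.smul_apply]
  rw [hr, dev_entry, dev_entry, dev_entry]
  simp only [PiLp.sub_apply, PiLp.smul_apply, smul_eq_mul]
  rw [Finset.sum_sub_distrib, ← Finset.mul_sum]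
  ring


/-- If `u^s = (W ⊗ I_d)(u^{s−1} − η·v^{s−1})` for `1 ≤ s ≤ S`, then
`‖u^S − 1ₙ⊗ū^S‖² ≤ (2α²/(1+α²))^S ‖u⁰ − 1ₙ⊗ū⁰‖²
  + (2α²η²/(1−α²)) Σ_{s<S} ‖v^s − 1ₙ⊗v̄^s‖²`. -/
theorem consensus_error_telescoped {n d : ℕ} (W : Matrix (Fin n) (Fin n) ℝ) (α : ℝ)
    (hW : IsMixing W) (hα : α = mixingRate W) (hα1 : α ∈ Set.Ico (0 : ℝ) 1)
    (η : ℝ) (S : ℕ) (hS : 1 ≤ S) (u v : ℕ → Stacked n d)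
    (hupd : ∀ s, 1 ≤ s → s ≤ S → u s = kronApply W (u (s - 1) - η • v (s - 1))) :
    ‖u S - stack n (blockAvg (u S))‖ ^ 2 ≤
      (2 * α ^ 2 / (1 + α ^ 2)) ^ S * ‖u 0 - stack n (blockAvg (u 0))‖ ^ 2
      + (2 * α ^ 2 * η ^ 2 / (1 - α ^ 2)) *
          ∑ s ∈ Finset.range S, ‖v s - stack n (blockAvg (v s))‖ ^ 2 := by
  obtain ⟨hα0, hαlt⟩ := hα1
  set ρ : ℝ := 2 * α ^ 2 / (1 + α ^ 2) with hρ
  set c : ℝ := 2 * α ^ 2 * η ^ 2 / (1 - α ^ 2) with hc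
  set e : ℕ → ℝ := fun s => ‖u s - stack n (blockAvg (u s))‖ ^ 2 with he
  set g : ℕ → ℝ := fun s => ‖v s - stack n (blockAvg (v s))‖ ^ 2 with hg
  have hα2lt : α ^ 2 < 1 := by nlinarith
  have h1p : (0:ℝ) < 1 + α ^ 2 := by positivity
  have h1m : (0:ℝ) < 1 - α ^ 2 := by linarith
  have hρ0 : 0 ≤ ρ := by positivity
  have hρ1 : ρ ≤ 1 := by rw [hρ, div_le_one h1p]; nlinarith
  have hc0 : 0 ≤ c := by positivity
  have he0 : ∀ s, 0 ≤ e s := fun s => sq_nonneg _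
  have hg0 : ∀ s, 0 ≤ g s := fun s => sq_nonneg _
  -- single step
  have step : ∀ s, 1 ≤ s → s ≤ S → e s ≤ ρ * e (s - 1) + c * g (s - 1) := by
    intro s h1 h2
    set a := u (s-1) - stack n (blockAvg (u (s-1))) with ha
    set b := v (s-1) - stack n (blockAvg (v (s-1))) with hb
    have hdev : u s - stack n (blockAvg (u s)) =
        kronApply (W - (n:ℝ)⁻¹ • Matrix.of fun _ _ => (1:ℝ)) (a - η • b) := by
      rw [hupd s h1 h2, dev_kron W hW, dev_sub_smul]
    have hbound : e s ≤ α ^ 2 * ‖a - η • b‖ ^ 2 := by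
      have := kron_norm_sq_le (W - (n:ℝ)⁻¹ • Matrix.of fun _ _ => (1:ℝ)) (a - η • b)
      rw [he]
      simp only []
      rw [hdev]
      calc ‖kronApply (W - (n:ℝ)⁻¹ • Matrix.of fun _ _ => (1:ℝ)) (a - η • b)‖ ^ 2
          ≤ _ := this
        _ = α ^ 2 * ‖a - η • b‖ ^ 2 := by rw [hα]; rfl
    have hnb : ‖η • b‖ ^ 2 = η ^ 2 * ‖b‖ ^ 2 := by
      rw [norm_smul, Real.norm_eq_abs, mul_pow, sq_abs]
    rcases eq_or_lt_of_le hα0 with hz | hpos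
    · -- α = 0
      have : α ^ 2 = 0 := by rw [← hz]; ring
      have h0 : e s ≤ 0 := by rw [this] at hbound; linarith
      have : ρ * e (s-1) + c * g (s-1) ≥ 0 := by positivity
      linarith
    · set β : ℝ := (1 - α^2) / (1 + α^2) with hβ
      have hβ0 : 0 < β := by positivity
      have hy := young_aux a (η • b) hβ0
      rw [hnb] at hy
      have hsq : ‖a‖ ^ 2 = e (s-1) := rfl
      have hsq' : ‖b‖ ^ 2 = g (s-1) := rfl
      rw [hsq, hsq'] at hy
      have hkey1 : α ^ 2 * (1 + β) = ρ := by
        rw [hβ, hρ]; field_simp; ring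
      have hβi : (1:ℝ) + β⁻¹ = 2 / (1 - α^2) := by
        rw [hβ, inv_div]
        field_simp
        ring
      have hkey2 : α ^ 2 * (1 + β⁻¹) * η ^ 2 = c := by
        rw [hβi, hc]; ring
      have hα2 : 0 ≤ α ^ 2 := sq_nonneg α
      calc e s ≤ α ^ 2 * ‖a - η • b‖ ^ 2 := hbound
        _ ≤ α ^ 2 * ((1+β) * e (s-1) + (1+β⁻¹) * (η^2 * g (s-1))) :=
            mul_le_mul_of_nonneg_left hy hα2
        _ = (α ^ 2 * (1+β)) * e (s-1) + (α ^ 2 * (1+β⁻¹) * η ^ 2) * g (s-1) := by ring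
        _ = ρ * e (s-1) + c * g (s-1) := by rw [hkey1, hkey2]
  -- induction
  have key : ∀ s, s ≤ S → e s ≤ ρ ^ s * e 0 + c * ∑ t ∈ Finset.range s, g t := by
    intro s
    induction s with
    | zero => intro _; simp
    | succ m ih =>
      intro hms
      have h1 := step (m+1) (by omega) hms
      have h2 := ih (by omega)
      have hsum0 : 0 ≤ ∑ t ∈ Finset.range m, g t := Finset.sum_nonneg fun t _ => hg0 t
      have hrm : (m+1) - 1 = m := rfl
      rw [hrm] at h1
      have hpow0 : 0 ≤ ρ ^ m := pow_nonneg hρ0 m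
      rw [Finset.sum_range_succ]
      have : e (m+1) ≤ ρ * (ρ ^ m * e 0 + c * ∑ t ∈ Finset.range m, g t) + c * g m := by
        have := mul_le_mul_of_nonneg_left h2 hρ0
        linarith
      calc e (m+1) ≤ ρ * (ρ ^ m * e 0 + c * ∑ t ∈ Finset.range m, g t) + c * g m := this
        _ = ρ ^ (m+1) * e 0 + ρ * (c * ∑ t ∈ Finset.range m, g t) + c * g m := by ring
        _ ≤ ρ ^ (m+1) * e 0 + 1 * (c * ∑ t ∈ Finset.range m, g t) + c * g m := by
            have h3 : 0 ≤ c * ∑ t ∈ Finset.range m, g t := mul_nonneg hc0 hsum0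
            nlinarith
        _ = ρ ^ (m+1) * e 0 + c * (∑ t ∈ Finset.range m, g t + g m) := by ring
  exact key S le_rfl
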